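/- arXiv:2411.18607 — 2 statements merged into one kernel-verified Lean document; each statement's English description precedes it below -/
import Mathlib

section
/- Under the hypotheses of the previous statement, if additionally each L_t is convex and H-smooth, then the data heterogeneity at the merged point vanishes: (1/T) Σ_{t=1}^T ‖∇L_t(θ_0 + λ Σ_s τ_s)‖² = 0, i.e., ∇L_t(θ_0 + λ Σ_s τ_s) = 0 for every t. -/
open MeasureTheory

/-- Under the Task Arithmetic property, with each `L t` convex and `H`-smooth and each
fine-tuned model stationary (`∇L_t(θ0 + τ_t) = 0`), the first-order data heterogeneity
at the merged point vanishes: `(1/T) Σ_t ‖∇L_t(θ0 + λ Σ_s τ_s)‖² = 0`, i.e. every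
`∇L_t(θ0 + λ Σ_s τ_s) = 0`. -/
theorem task_arithmetic_property_implies_zero_heterogeneity
    {d T : ℕ} (hT : 0 < T) (H : ℝ) (hH : 0 < H)
    {X Y F : Type*} [MeasurableSpace X] [MeasurableSpace Y]
    (D : Fin T → Measure (X × Y)) (hD : ∀ t, IsProbabilityMeasure (D t))
    (f : X → EuclideanSpace ℝ (Fin d) → F)
    (ℓ : F → Y → ℝ)
    (θ0 : EuclideanSpace ℝ (Fin d))
    (τ : Fin T → EuclideanSpace ℝ (Fin d))
    (lam : ℝ)
    (L : Fin T → EuclideanSpace ℝ (Fin d) → ℝ)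
    (hL : ∀ t θ, L t θ = ∫ p, ℓ (f p.1 θ) p.2 ∂ (D t))
    (g : Fin T → EuclideanSpace ℝ (Fin d) → EuclideanSpace ℝ (Fin d))
    (hgrad : ∀ t θ, HasGradientAt (L t) (g t θ) θ)
    (hconv : ∀ t, ConvexOn ℝ Set.univ (L t))
    (hsmooth : ∀ t θ φ, ‖g t θ - g t φ‖ ≤ H * ‖θ - φ‖)
    (hTA : ∀ t, ∀ᵐ p ∂ (D t),
      f p.1 (θ0 + lam • ∑ s, τ s) = f p.1 (θ0 + τ t))
    (hopt : ∀ t, g t (θ0 + τ t) = 0) :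
    (1 / (T : ℝ)) * ∑ t, ‖g t (θ0 + lam • ∑ s, τ s)‖ ^ 2 = 0 ∧
      ∀ t, g t (θ0 + lam • ∑ s, τ s) = 0 := by
  -- abbreviations
  set m := θ0 + lam • ∑ s, τ s with hm
  have key : ∀ t, g t m = 0 := by
    intro t
    set x := θ0 + τ t with hx
    -- Step A: L t m = L t x
    have hval : L t m = L t x := by
      rw [hL t m, hL t x]
      exact integral_congr_ae ((hTA t).mono fun p hp => by simp only [hp, hx])
    -- Step B: x is a global minimum of L t
    have hmin : ∀ y, L t x ≤ L t y := by
      intro y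
      have hc : HasDerivAt (fun s : ℝ => AffineMap.lineMap x y s) (y - x) (0 : ℝ) :=
        AffineMap.hasDerivAt_lineMap
      have hfx : HasFDerivAt (L t) ((InnerProductSpace.toDual ℝ _) (g t x)) x :=
        (hasGradientAt_iff_hasFDerivAt.mp (hgrad t x))
      have hline0 : (AffineMap.lineMap x y : ℝ → _) 0 = x := by simp
      have hfx' : HasFDerivAt (L t) ((InnerProductSpace.toDual ℝ _) (g t x))
          ((AffineMap.lineMap x y : ℝ → _) 0) := by rw [hline0]; exact hfx
      have hd : HasDerivAt (fun s : ℝ => L t (AffineMap.lineMap x y s))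
          (((InnerProductSpace.toDual ℝ _) (g t x)) (y - x)) 0 :=
        hfx'.comp_hasDerivAt (0 : ℝ) hc
      have hd0 : HasDerivAt (fun s : ℝ => L t (AffineMap.lineMap x y s)) 0 0 := by
        simpa [hopt t, ← hx, show g t x = 0 from hopt t] using hd
      have hconv' : ConvexOn ℝ Set.univ (fun s : ℝ => L t (AffineMap.lineMap x y s)) := by
        have := (hconv t).comp_affineMap (AffineMap.lineMap x y)
        exact this
      have hslope := hconv'.le_slope_of_hasDerivAt (Set.mem_univ (0:ℝ)) (Set.mem_univ (1:ℝ))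
        one_pos hd0
      rw [slope_def_field] at hslope
      simp only [AffineMap.lineMap_apply_one, AffineMap.lineMap_apply_zero] at hslope
      have : (0:ℝ) ≤ L t y - L t x := by
        simpa using hslope
      linarith
    -- Step C: m is a local (indeed global) min, so the gradient vanishes
    have hminm : IsLocalMin (L t) m := by
      refine Filter.Eventually.of_forall fun z => ?_
      rw [hval]; exact hmin z
    have hfm : HasFDerivAt (L t) ((InnerProductSpace.toDual ℝ _) (g t m)) m :=
      (hasGradientAt_iff_hasFDerivAt.mp (hgrad t m))
    have h0 := hminm.hasFDerivAt_eq_zero hfm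
    have := (InnerProductSpace.toDual ℝ (EuclideanSpace ℝ (Fin d))).injective
      (by simpa using h0)
    simpa using this
  refine ⟨?_, key⟩
  simp [key]
end

section
/- Let {L_t} and weights {w_t} satisfy bounded gradient heterogeneity with constants α, ζ. If E[‖∇L̃(θ)‖²] ≤ ε where L̃ = Σ_t w_t L_t, then the gradient of the uniform average L = (1/T) Σ_t L_t satisfies E[‖∇L(θ)‖²] ≤ 2[χ²_{p‖w}(α² − 1) + 1] ε + 2 χ²_{p‖w} ζ², where χ²_{p‖w} = Σ_t (1/T − w_t)²/w_t. In particular, if w_t = 1/T for all t then E[‖∇L(θ)‖²] ≤ ε (for α ≥ 1). -/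
open Finset

variable {T : ℕ} {E : Type*} [NormedAddCommGroup E] [InnerProductSpace ℝ E]

lemma cs_weighted (w a : Fin T → ℝ) (v : Fin T → E) (hw : ∀ t, 0 < w t) :
    ‖∑ t, a t • v t‖ ^ 2 ≤ (∑ t, a t ^ 2 / w t) * ∑ t, w t * ‖v t‖ ^ 2 := by
  have h1 : ‖∑ t, a t • v t‖ ≤ ∑ t, |a t| * ‖v t‖ := by
    calc ‖∑ t, a t • v t‖ ≤ ∑ t, ‖a t • v t‖ := norm_sum_le _ _
    _ = ∑ t, |a t| * ‖v t‖ := by simp [norm_smul]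
  have h2 := sum_mul_sq_le_sq_mul_sq Finset.univ
    (fun t => |a t| / Real.sqrt (w t)) (fun t => Real.sqrt (w t) * ‖v t‖)
  have he : ∀ t : Fin T, |a t| / Real.sqrt (w t) * (Real.sqrt (w t) * ‖v t‖)
      = |a t| * ‖v t‖ := by
    intro t
    have : Real.sqrt (w t) ≠ 0 := ne_of_gt (Real.sqrt_pos.mpr (hw t))
    field_simp
  have he2 : ∀ t : Fin T, (|a t| / Real.sqrt (w t)) ^ 2 = a t ^ 2 / w t := by
    intro t
    rw [div_pow, sq_abs, Real.sq_sqrt (hw t).le]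
  have he3 : ∀ t : Fin T, (Real.sqrt (w t) * ‖v t‖) ^ 2 = w t * ‖v t‖ ^ 2 := by
    intro t
    rw [mul_pow, Real.sq_sqrt (hw t).le]
  simp only [he, he2, he3] at h2
  calc ‖∑ t, a t • v t‖ ^ 2 ≤ (∑ t, |a t| * ‖v t‖) ^ 2 := by
        apply pow_le_pow_left₀ (norm_nonneg _) h1
  _ ≤ _ := h2

lemma variance_identity (w : Fin T → ℝ) (v : Fin T → E) (hwsum : ∑ t, w t = 1) :
    ∑ t, w t * ‖v t - ∑ s, w s • v s‖ ^ 2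
      = ∑ t, w t * ‖v t‖ ^ 2 - ‖∑ s, w s • v s‖ ^ 2 := by
  set G : E := ∑ s, w s • v s with hG
  have expand : ∀ t, ‖v t - G‖ ^ 2 = ‖v t‖ ^ 2 - 2 * inner ℝ (v t) G + ‖G‖ ^ 2 := by
    intro t
    rw [norm_sub_sq_real]
  have hsum : ∑ t, w t * inner ℝ (v t) G = (‖G‖ : ℝ) ^ 2 := by
    have : ∑ t, w t * (inner ℝ (v t) G : ℝ) = inner ℝ G G := by
      rw [hG, sum_inner]
      congr 1; ext t
      rw [real_inner_smul_left]
    rw [this, real_inner_self_eq_norm_sq]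
  calc ∑ t, w t * ‖v t - G‖ ^ 2
      = ∑ t, (w t * ‖v t‖ ^ 2 - 2 * (w t * inner ℝ (v t) G) + w t * ‖G‖ ^ 2) := by
        congr 1; ext t; rw [expand t]; ring
  _ = ∑ t, w t * ‖v t‖ ^ 2 - 2 * ∑ t, w t * (inner ℝ (v t) G : ℝ)
        + (∑ t, w t) * ‖G‖ ^ 2 := by
        rw [Finset.sum_add_distrib, Finset.sum_sub_distrib, ← Finset.mul_sum,
          ← Finset.sum_mul]
  _ = _ := by rw [hsum, hwsum]; ring

/-- Objective inconsistency transfer (deterministic version of Theorem 2 of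
Wang et al.): under bounded gradient heterogeneity with constants `α ≥ 1`, `ζ ≥ 0`
for the weights `w`, if the gradient of `L̃ = Σ_t w_t L_t` satisfies
`‖∇L̃(θ)‖² ≤ ε`, then the gradient of the uniform average `L = (1/T) Σ_t L_t`
satisfies `‖∇L(θ)‖² ≤ 2[χ²_{p‖w}(α² - 1) + 1] ε + 2 χ²_{p‖w} ζ²`, where
`χ²_{p‖w} = Σ_t (1/T - w_t)²/w_t`. In particular, with uniform weights `w_t = 1/T`
we get `‖∇L(θ)‖² ≤ ε`. -/
theorem gradient_bound_transfer_under_heterogeneity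
    {d T : ℕ} (hT : 0 < T) (α ζ ε : ℝ) (hα : 1 ≤ α) (hζ : 0 ≤ ζ) (hε : 0 ≤ ε)
    (L : Fin T → EuclideanSpace ℝ (Fin d) → ℝ)
    (g : Fin T → EuclideanSpace ℝ (Fin d) → EuclideanSpace ℝ (Fin d))
    (hdiff : ∀ t θ, HasGradientAt (L t) (g t θ) θ)
    (w : Fin T → ℝ) (hw : ∀ t, 0 < w t) (hwsum : ∑ t, w t = 1)
    (hhet : ∀ θ : EuclideanSpace ℝ (Fin d),
      ∑ t, w t * ‖g t θ‖ ^ 2 ≤ α ^ 2 * ‖∑ t, w t • g t θ‖ ^ 2 + ζ ^ 2)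
    (θ : EuclideanSpace ℝ (Fin d))
    (hLtilde : ‖∑ t, w t • g t θ‖ ^ 2 ≤ ε) :
    ‖(1 / (T : ℝ)) • ∑ t, g t θ‖ ^ 2 ≤
        2 * ((∑ t, (1 / (T : ℝ) - w t) ^ 2 / w t) * (α ^ 2 - 1) + 1) * ε
          + 2 * (∑ t, (1 / (T : ℝ) - w t) ^ 2 / w t) * ζ ^ 2 ∧
      ((∀ t, w t = 1 / T) → ‖(1 / (T : ℝ)) • ∑ t, g t θ‖ ^ 2 ≤ ε) := by
  set G : EuclideanSpace ℝ (Fin d) := ∑ t, w t • g t θ with hG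
  set χ : ℝ := ∑ t, (1 / (T : ℝ) - w t) ^ 2 / w t with hχ
  have hχ0 : 0 ≤ χ := Finset.sum_nonneg fun t _ => div_nonneg (sq_nonneg _) (hw t).le
  -- decomposition
  have hA : (1 / (T : ℝ)) • ∑ t, g t θ = G + ∑ t, (1 / (T : ℝ) - w t) • g t θ := by
    rw [hG, Finset.smul_sum, ← Finset.sum_add_distrib]
    congr 1; ext t
    rw [← add_smul]; ring_nf
  set D : EuclideanSpace ℝ (Fin d) := ∑ t, (1 / (T : ℝ) - w t) • g t θ with hD
  -- rewrite D in centered form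
  have hc0 : ∑ t, (1 / (T : ℝ) - w t) = 0 := by
    rw [Finset.sum_sub_distrib, hwsum]
    simp [Finset.card_univ]
    field_simp
    norm_num
  have hDc : D = ∑ t, (1 / (T : ℝ) - w t) • (g t θ - G) := by
    rw [hD]
    rw [show ∑ t, (1 / (T : ℝ) - w t) • (g t θ - G)
        = (∑ t, (1 / (T : ℝ) - w t) • g t θ) - (∑ t, (1 / (T : ℝ) - w t)) • G by
      rw [Finset.sum_smul, ← Finset.sum_sub_distrib]
      congr 1; ext t; rw [smul_sub]]
    rw [hc0, zero_smul, sub_zero]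
  -- bound on D
  have hDbound : ‖D‖ ^ 2 ≤ χ * ((α ^ 2 - 1) * ε + ζ ^ 2) := by
    have h1 : ‖D‖ ^ 2 ≤ χ * ∑ t, w t * ‖g t θ - G‖ ^ 2 := by
      rw [hDc]; exact cs_weighted w _ _ hw
    have h2 : ∑ t, w t * ‖g t θ - G‖ ^ 2 = ∑ t, w t * ‖g t θ‖ ^ 2 - ‖G‖ ^ 2 :=
      variance_identity w (fun t => g t θ) hwsum
    have h3 : ∑ t, w t * ‖g t θ‖ ^ 2 - ‖G‖ ^ 2 ≤ (α ^ 2 - 1) * ε + ζ ^ 2 := by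
      have := hhet θ
      have hα2 : 0 ≤ α ^ 2 - 1 := by nlinarith
      nlinarith [hLtilde]
    calc ‖D‖ ^ 2 ≤ χ * ∑ t, w t * ‖g t θ - G‖ ^ 2 := h1
    _ ≤ χ * ((α ^ 2 - 1) * ε + ζ ^ 2) := by
        apply mul_le_mul_of_nonneg_left _ hχ0
        rw [h2]; exact h3
  have hmain : ‖(1 / (T : ℝ)) • ∑ t, g t θ‖ ^ 2
      ≤ 2 * ‖G‖ ^ 2 + 2 * ‖D‖ ^ 2 := by
    rw [hA]
    have h := norm_add_le G D
    have hsq : ‖G + D‖ ^ 2 ≤ (‖G‖ + ‖D‖) ^ 2 :=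
      pow_le_pow_left₀ (norm_nonneg _) h 2
    nlinarith [sq_nonneg (‖G‖ - ‖D‖)]
  constructor
  · calc ‖(1 / (T : ℝ)) • ∑ t, g t θ‖ ^ 2 ≤ 2 * ‖G‖ ^ 2 + 2 * ‖D‖ ^ 2 := hmain
    _ ≤ 2 * ε + 2 * (χ * ((α ^ 2 - 1) * ε + ζ ^ 2)) := by nlinarith
    _ = 2 * (χ * (α ^ 2 - 1) + 1) * ε + 2 * χ * ζ ^ 2 := by ring
  · intro huni
    have : (1 / (T : ℝ)) • ∑ t, g t θ = G := by
      rw [hG, Finset.smul_sum]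
      congr 1; ext t; rw [huni t]
    rw [this]; exact hLtilde
end
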